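/- For every positive integer n, the finite sum over k from 1 to n-1 of 1/sin²(kπ/(2n)) equals 2(n² - 1)/3. -/

import Mathlib

open Real

lemma choose_two_mul_aux (m : ℕ) : m.choose 2 * 2 = m * (m - 1) := by
  induction m with
  | zero => rfl
  | succ k ih =>
    rw [Nat.choose_succ_succ, Nat.add_mul, ih, Nat.choose_one_right]
    cases k with
    | zero => rfl
    | succ j => simp [Nat.succ_sub_one]; ring

lemma choose_three_mul_aux (m : ℕ) : m.choose 3 * 6 = m * (m - 1) * (m - 2) := by
  induction m with
  | zero => rfl
  | succ k ih =>
    rw [Nat.choose_succ_succ, Nat.add_mul, ih]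
    have h2 := choose_two_mul_aux k
    cases k with
    | zero => rfl
    | succ j =>
      cases j with
      | zero => rfl
      | succ i =>
        simp only [Nat.succ_sub_one] at *
        have h3 : (i+2).choose 2 * 6 = ((i+2)*(i+1))*3 := by
          have : (i+2).choose 2 * 2 = (i+2)*(i+1) := h2
          omega
        rw [h3]
        have e2 : i + 1 + 1 - 2 = i := by omega
        have e3 : i + 1 + 1 + 1 - 2 = i + 1 := by omega
        rw [e2, e3]
        ring

open Complex Finset in
lemma im_pow_aux (n : ℕ) (t : ℝ) :
    (((t : ℂ) + Complex.I) ^ (2 * n)).im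
      = t * ∑ l ∈ Finset.range n,
          (-1 : ℝ) ^ (n - 1 - l) * (2 * n).choose (2 * l + 1) * (t ^ 2) ^ l := by
  rw [add_pow, Complex.im_sum, Finset.mul_sum]
  set f : ℕ → ℝ := fun j => ((t:ℂ) ^ j * Complex.I ^ (2*n - j) * ((2*n).choose j : ℂ)).im with hf
  have hzero : ∀ j ∈ Finset.range (2*n+1), j ∉ (Finset.range n).image (fun l => 2*l+1) → f j = 0 := by
    intro j hj hj'
    simp only [Finset.mem_image, Finset.mem_range] at hj hj'
    have hev : Even j := by
      rcases Nat.even_or_odd j with h | h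
      · exact h
      · obtain ⟨q, hq⟩ := h
        exact absurd ⟨q, by omega, by omega⟩ hj'
    obtain ⟨q, rfl⟩ := hev
    have h1 : 2 * n - (q + q) = 2 * (n - q) := by omega
    have hI : Complex.I ^ (2 * (n - q)) = (-1:ℂ) ^ (n - q) := by
      rw [pow_mul, Complex.I_sq]
    simp only [hf]
    rw [h1, hI]
    have : (t:ℂ)^(q+q) * ((-1:ℂ))^(n-q) * ((2*n).choose (q+q) : ℂ)
        = ((t^(q+q) * (-1:ℝ)^(n-q) * ((2*n).choose (q+q)) : ℝ) : ℂ) := by push_cast; ring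
    rw [this, Complex.ofReal_im]
  calc ∑ j ∈ Finset.range (2*n+1), f j
      = ∑ j ∈ (Finset.range n).image (fun l => 2*l+1), f j := by
        refine (Finset.sum_subset ?_ hzero).symm
        intro j hj
        simp only [Finset.mem_image, Finset.mem_range] at hj ⊢
        obtain ⟨l, hl, rfl⟩ := hj; omega
    _ = ∑ l ∈ Finset.range n, f (2*l+1) :=
        Finset.sum_image (by intro a _ b _ h; simp only at h; omega)
    _ = _ := by
        apply Finset.sum_congr rfl
        intro l hl
        simp only [Finset.mem_range] at hl
        have h2 : 2 * n - (2 * l + 1) = 2 * (n - 1 - l) + 1 := by omega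
        have hI : Complex.I ^ (2 * (n - 1 - l) + 1) = (-1:ℂ) ^ (n - 1 - l) * Complex.I := by
          rw [pow_succ, pow_mul, Complex.I_sq]
        simp only [hf]
        rw [h2, hI]
        have h3 : (t:ℂ)^(2*l+1) * ((-1:ℂ)^(n-1-l) * Complex.I) * ((2*n).choose (2*l+1) : ℂ)
            = ((t^(2*l+1) * (-1:ℝ)^(n-1-l) * ((2*n).choose (2*l+1)) : ℝ) : ℂ) * Complex.I := by
          push_cast; ring
        rw [h3, Complex.mul_I_im, Complex.ofReal_re]
        have h4 : t^(2*l+1) = (t^2)^l * t := by rw [pow_succ, pow_mul]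
        rw [h4]; ring


open Real Polynomial in
theorem csc_squared_sum (n : ℕ) (hn : 0 < n) :
    ∑ k ∈ Finset.Ico 1 n, 1 / Real.sin ((k : ℝ) * π / (2 * n)) ^ 2
      = 2 * ((n : ℝ) ^ 2 - 1) / 3 := by
  by_cases h1 : n = 1
  · subst h1; norm_num
  have hn2 : 2 ≤ n := by omega
  have hπ := Real.pi_pos
  have hnR : (0:ℝ) < n := by exact_mod_cast hn
  set θ : ℕ → ℝ := fun k => (k : ℝ) * π / (2 * n) with hθ
  have hθmem : ∀ k ∈ Finset.Ico 1 n, 0 < θ k ∧ θ k < π / 2 := by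
    intro k hk
    simp only [Finset.mem_Ico] at hk
    have hk1 : (1:ℝ) ≤ k := by exact_mod_cast hk.1
    have hk2 : (k:ℝ) < n := by exact_mod_cast hk.2
    constructor
    · apply div_pos (by nlinarith) (by positivity)
    · rw [div_lt_iff₀ (by positivity)]
      nlinarith
  set s : ℕ → ℝ := fun k => Real.sin (θ k) with hsdef
  set c : ℕ → ℝ := fun k => Real.cos (θ k) with hcdef
  have hs : ∀ k ∈ Finset.Ico 1 n, 0 < s k := by
    intro k hk
    exact Real.sin_pos_of_pos_of_lt_pi (hθmem k hk).1 (by linarith [(hθmem k hk).2])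
  have hc : ∀ k ∈ Finset.Ico 1 n, 0 < c k := by
    intro k hk
    exact Real.cos_pos_of_mem_Ioo ⟨by linarith [(hθmem k hk).1], (hθmem k hk).2⟩
  set r : ℕ → ℝ := fun k => (c k / s k) ^ 2 with hrdef
  have hr1 : ∀ k ∈ Finset.Ico 1 n, r k = 1 / s k ^ 2 - 1 := by
    intro k hk
    have hsk := (hs k hk).ne'
    have hpyth : s k ^ 2 + c k ^ 2 = 1 := Real.sin_sq_add_cos_sq (θ k)
    have hr : r k * s k ^ 2 = c k ^ 2 := by
      simp only [hrdef]
      rw [div_pow, div_mul_cancel₀ _ (pow_ne_zero 2 hsk)]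
    field_simp [hrdef]
    nlinarith [hpyth, hr]
  -- the polynomial with roots cot^2 (θ k)
  set P : Polynomial ℝ :=
    ∑ l ∈ Finset.range n, Polynomial.C ((-1:ℝ)^(n-1-l) * ((2*n).choose (2*l+1) : ℝ))
      * Polynomial.X ^ l with hP
  have hcoeff : ∀ j, P.coeff j
      = if j < n then (-1:ℝ)^(n-1-j) * ((2*n).choose (2*j+1) : ℝ) else 0 := by
    intro j
    simp only [hP, Polynomial.finset_sum_coeff, Polynomial.coeff_C_mul, Polynomial.coeff_X_pow,
      mul_ite, mul_one, mul_zero]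
    rw [Finset.sum_ite_eq]
    simp [Finset.mem_range]
  have hchoose_top : (2*n).choose (2*(n-1)+1) = 2*n := by
    have h : 2*(n-1)+1 = 2*n - 1 := by omega
    rw [h, show (2*n - 1) = 2*n - 1 from rfl, Nat.choose_symm (by omega), Nat.choose_one_right]
  have hcoeff_top : P.coeff (n-1) = 2*n := by
    rw [hcoeff, if_pos (by omega)]
    rw [show n-1-(n-1) = 0 by omega, hchoose_top]
    push_cast; ring
  have hPne : P ≠ 0 := fun h => by
    have := hcoeff_top
    rw [h] at this
    simp at this
    omega
  have hdeg : P.natDegree = n - 1 := by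
    apply le_antisymm
    · rw [Polynomial.natDegree_le_iff_coeff_eq_zero]
      intro m hm
      rw [hcoeff, if_neg (by omega)]
    · apply Polynomial.le_natDegree_of_ne_zero
      rw [hcoeff_top]
      positivity
  have hlcP : P.leadingCoeff = 2*n := by
    rw [Polynomial.leadingCoeff, hdeg, hcoeff_top]
  have him : ∀ t : ℝ, P.eval (t^2) * t = (((t:ℂ) + Complex.I) ^ (2*n)).im := by
    intro t
    rw [im_pow_aux, hP]
    simp only [Polynomial.eval_finset_sum, Polynomial.eval_mul, Polynomial.eval_C,
      Polynomial.eval_pow, Polynomial.eval_X]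
    rw [Finset.sum_mul, Finset.mul_sum]
    exact Finset.sum_congr rfl fun l _ => by ring
  have hroot : ∀ k ∈ Finset.Ico 1 n, P.eval (r k) = 0 := by
    intro k hk
    have hsk := (hs k hk).ne'
    have hck := (hc k hk).ne'
    have h2 : (((c k / s k : ℝ) : ℂ) + Complex.I) * (s k : ℂ)
        = Complex.exp ((θ k : ℝ) * Complex.I) := by
      rw [Complex.exp_mul_I, ← Complex.ofReal_cos, ← Complex.ofReal_sin]
      have hsc : ((s k : ℝ) : ℂ) ≠ 0 := Complex.ofReal_ne_zero.mpr hsk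
      push_cast
      field_simp
      simp only [hcdef, hsdef]
      rw [Complex.ofReal_cos, Complex.ofReal_sin]
      ring
    have h3 : ((((c k / s k : ℝ) : ℂ) + Complex.I)) ^ (2*n) * ((s k : ℂ)) ^ (2*n)
        = Complex.exp (((k : ℝ) * π : ℝ) * Complex.I) := by
      rw [← mul_pow, h2, ← Complex.exp_nat_mul]
      congr 1
      push_cast
      rw [hθ]
      push_cast
      have : (n:ℂ) ≠ 0 := by exact_mod_cast hnR.ne'
      field_simp
      try ring
    have h4 : ((((c k / s k : ℝ) : ℂ) + Complex.I) ^ (2*n)).im * (s k) ^ (2*n) = 0 := by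
      have h5 := congrArg Complex.im h3
      rw [Complex.exp_ofReal_mul_I_im, Real.sin_nat_mul_pi] at h5
      rw [← Complex.ofReal_pow, Complex.im_mul_ofReal] at h5
      exact h5
    have h7 : P.eval (r k) * (c k / s k) * (s k) ^ (2*n) = 0 := by
      have h6 : P.eval (r k) * (c k / s k)
          = ((((c k / s k : ℝ) : ℂ) + Complex.I) ^ (2*n)).im := him (c k / s k)
      rw [h6]; exact h4
    have hcs : c k / s k ≠ 0 := div_ne_zero hck hsk
    have hsp : (s k) ^ (2*n) ≠ 0 := pow_ne_zero _ hsk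
    simpa [mul_eq_zero, hcs, hsp] using h7
  have hinj : Set.InjOn r (Finset.Ico 1 n) := by
    intro a ha b hb hab
    have h1a := hr1 a ha; have h1b := hr1 b hb
    have hsa := hs a ha; have hsb := hs b hb
    rw [h1a, h1b] at hab
    have hs2 : s a ^ 2 = s b ^ 2 := by
      field_simp at hab
      linarith
    have hsab : s a = s b := by nlinarith
    have hθab : θ a = θ b := by
      have hma := hθmem a ha; have hmb := hθmem b hb
      exact Real.injOn_sin ⟨by linarith [hma.1], by linarith [hma.2]⟩
        ⟨by linarith [hmb.1], by linarith [hmb.2]⟩ hsab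
    have hab2 : a = b := by
      rw [hθ] at hθab
      simp only at hθab
      have h2n : (2*(n:ℝ)) ≠ 0 := by positivity
      field_simp at hθab
      exact_mod_cast hθab
    exact hab2
  have hcard : (Finset.Ico 1 n).card = n - 1 := by rw [Nat.card_Ico]
  set Q : Polynomial ℝ := ∏ k ∈ Finset.Ico 1 n, (Polynomial.X - Polynomial.C (r k)) with hQ
  have hQmonic : Q.Monic :=
    Polynomial.monic_prod_of_monic _ _ fun k _ => Polynomial.monic_X_sub_C _
  have hQdeg : Q.natDegree = n - 1 := by
    rw [hQ, Polynomial.natDegree_prod _ _ fun k _ => Polynomial.X_sub_C_ne_zero _]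
    simp [Polynomial.natDegree_X_sub_C, hcard]
  set g : Polynomial ℝ := Polynomial.C (2*(n:ℝ)) * Q with hg
  have h2n0 : (2*(n:ℝ)) ≠ 0 := by positivity
  have hgdeg : g.degree = ((n-1 : ℕ) : WithBot ℕ) := by
    rw [hg, Polynomial.degree_C_mul h2n0, Polynomial.degree_eq_natDegree hQmonic.ne_zero, hQdeg]
  have hPdeg : P.degree = ((n-1 : ℕ) : WithBot ℕ) := by
    rw [Polynomial.degree_eq_natDegree hPne, hdeg]
  have hlcg : g.leadingCoeff = 2*(n:ℝ) := by
    rw [hg, Polynomial.leadingCoeff_mul, Polynomial.leadingCoeff_C, hQmonic.leadingCoeff]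
    ring
  have hPg : P = g := by
    apply Polynomial.eq_of_degree_sub_lt_of_eval_index_eq (Finset.Ico 1 n) hinj
    · rw [hcard]
      calc (P - g).degree < P.degree := Polynomial.degree_sub_lt (by rw [hPdeg, hgdeg]) hPne
            (by rw [hlcP, hlcg])
        _ ≤ ((n-1 : ℕ) : WithBot ℕ) := le_of_eq hPdeg
    · intro k hk
      rw [hroot k hk, hg, Polynomial.eval_mul, Polynomial.eval_prod]
      rw [Finset.prod_eq_zero hk (by simp)]
      ring
  have hc2P : P.coeff (n-2) = -(((2*n).choose 3 : ℕ) : ℝ) := by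
    rw [hcoeff, if_pos (by omega), show n-1-(n-2) = 1 by omega]
    have hcs : (2*n).choose (2*(n-2)+1) = (2*n).choose 3 := by
      rw [show 2*(n-2)+1 = 2*n - 3 by omega, Nat.choose_symm (by omega)]
    rw [hcs]; ring
  have hc2g : g.coeff (n-2) = 2*(n:ℝ) * -(∑ k ∈ Finset.Ico 1 n, r k) := by
    rw [hg, Polynomial.coeff_C_mul]
    have hnext : Q.coeff (n-2) = Q.nextCoeff := by
      rw [Polynomial.nextCoeff_of_natDegree_pos (by rw [hQdeg]; omega), hQdeg,
        show n-1-1 = n-2 by omega]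
    rw [hnext, hQ, Polynomial.prod_X_sub_C_nextCoeff]
  have hsum_r : ∑ k ∈ Finset.Ico 1 n, r k = (((2*n).choose 3 : ℕ) : ℝ) / (2*(n:ℝ)) := by
    have h := hc2P
    rw [hPg, hc2g] at h
    field_simp
    linarith
  have hfin : ∀ k ∈ Finset.Ico 1 n, 1 / Real.sin ((k:ℝ) * π / (2 * (n:ℝ))) ^ 2 = 1 + r k := by
    intro k hk
    rw [hr1 k hk]
    simp only [hsdef, hθ]
    ring
  rw [Finset.sum_congr rfl hfin, Finset.sum_add_distrib, Finset.sum_const, hcard, hsum_r]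
  have hch : (((2*n).choose 3 : ℕ) : ℝ) * 6 = (2*(n:ℝ)) * (2*(n:ℝ)-1) * (2*(n:ℝ)-2) := by
    have h := congrArg (Nat.cast : ℕ → ℝ) (choose_three_mul_aux (2*n))
    push_cast [Nat.cast_sub (by omega : 1 ≤ 2*n), Nat.cast_sub (by omega : 2 ≤ 2*n)] at h
    linarith
  have hn1 : ((n - 1 : ℕ) : ℝ) = (n:ℝ) - 1 := by
    push_cast [Nat.cast_sub (by omega : 1 ≤ n)]; ring
  rw [nsmul_eq_mul, hn1]
  have hC : (((2*n).choose 3 : ℕ) : ℝ) = (2*(n:ℝ)) * (2*(n:ℝ)-1) * (2*(n:ℝ)-2) / 6 := by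
    linarith
  rw [hC]
  field_simp
  ring
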